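/- For λ > 0 large, δ = d/(λ ln λ) with fixed d > 0, and a bounded domain Ω ⊂ ℝ⁴ containing ξ, the correction W_{λ,δ,ξ}(x) = αλδ W(√λ|x−ξ|) (with W(r)=1/r²−K₁(r)/r, α=2√2) satisfies ‖W_{λ,δ,ξ}‖_{L⁴(Ω)}⁴ ≤ C λ² δ⁴ (ln λ)⁴ → 0 as λ → ∞. -/

import Mathlib

noncomputable section

open MeasureTheory Filter

abbrev E4 := EuclideanSpace ℝ (Fin 4)

def besselK1 (r : ℝ) : ℝ :=
  ∫ t in Set.Ioi (0:ℝ), Real.exp (-r * Real.cosh t) * Real.cosh t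

def Wfun (r : ℝ) : ℝ := 1 / r^2 - besselK1 r / r

def Wcorr (lam δ : ℝ) (ξ : E4) (x : E4) : ℝ :=
  (2 * Real.sqrt 2) * lam * δ * Wfun (Real.sqrt lam * ‖x - ξ‖)

open Set Real in
lemma besselK1_nonneg (r : ℝ) : 0 ≤ besselK1 r := by
  apply setIntegral_nonneg measurableSet_Ioi
  intro t _
  positivity

open Set Real in
lemma besselK1_eq (r : ℝ) :
    besselK1 r = ∫ u in Ioi (0:ℝ), Real.exp (-r * Real.sqrt (1 + u^2)) := by
  have himg : Real.sinh '' (Ioi 0) = Ioi (0:ℝ) := by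
    ext u
    simp only [mem_image, mem_Ioi]
    constructor
    · rintro ⟨t, ht, rfl⟩; exact Real.sinh_pos_iff.mpr ht
    · intro hu; exact ⟨Real.arsinh u, Real.arsinh_pos_iff.mpr hu, Real.sinh_arsinh u⟩
  have hcv := integral_image_eq_integral_abs_deriv_smul (s := Ioi (0:ℝ)) (f' := Real.cosh)
      measurableSet_Ioi (fun x _ => (Real.hasDerivAt_sinh x).hasDerivWithinAt)
      Real.sinh_injective.injOn (fun u => Real.exp (-r * Real.sqrt (1 + u^2)))
  rw [himg] at hcv
  rw [hcv, besselK1]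
  apply setIntegral_congr_fun measurableSet_Ioi
  intro t _
  have h1 : 1 + Real.sinh t ^ 2 = Real.cosh t ^ 2 := by
    have := Real.cosh_sq t; linarith
  have h2 : Real.sqrt (1 + Real.sinh t ^ 2) = Real.cosh t := by
    rw [h1, Real.sqrt_sq (Real.cosh_pos t).le]
  simp only [smul_eq_mul, h2, abs_of_pos (Real.cosh_pos t)]
  ring

open Set Real in
lemma integrableOn_exp_neg_mul (r : ℝ) (hr : 0 < r) :
    IntegrableOn (fun u => Real.exp (-r * u)) (Ioi (0:ℝ)) := exp_neg_integrableOn_Ioi 0 hr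

open Set Real in
lemma integrableOn_exp_sqrt (r : ℝ) (hr : 0 < r) :
    IntegrableOn (fun u => Real.exp (-r * Real.sqrt (1 + u^2))) (Ioi (0:ℝ)) := by
  apply Integrable.mono' (integrableOn_exp_neg_mul r hr)
  · exact (Real.continuous_exp.comp (by continuity)).aestronglyMeasurable
  · filter_upwards with u
    rw [Real.norm_eq_abs, abs_of_pos (Real.exp_pos _)]
    apply Real.exp_le_exp.mpr
    have : u ≤ Real.sqrt (1 + u^2) := by
      nlinarith [Real.sq_sqrt (by positivity : (0:ℝ) ≤ 1 + u^2),
        Real.sqrt_nonneg (1 + u^2)]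
    nlinarith
open Set Real in
lemma sqrt_one_add_sq_le (u : ℝ) (hu : 0 < u) :
    Real.sqrt (1 + u^2) ≤ u + (Real.sqrt u)⁻¹ := by
  have hs : Real.sqrt u > 0 := Real.sqrt_pos.mpr hu
  have hsq : Real.sqrt u ^ 2 = u := Real.sq_sqrt hu.le
  have hb : (0:ℝ) ≤ u + (Real.sqrt u)⁻¹ := by positivity
  have key : 1 + u^2 ≤ (u + (Real.sqrt u)⁻¹)^2 := by
    have h1 : (u + (Real.sqrt u)⁻¹)^2 = u^2 + 2 * Real.sqrt u + u⁻¹ := by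
      field_simp
      linear_combination (-(2*u*Real.sqrt u+1)) * hsq
    have h2 : 1 ≤ 2 * Real.sqrt u + u⁻¹ := by
      rcases le_or_gt 1 u with h | h
      · have : 1 ≤ Real.sqrt u := by
          nlinarith [hsq, hs]
        nlinarith [inv_nonneg.mpr hu.le]
      · have : 1 ≤ u⁻¹ := (one_le_inv_iff₀).mpr ⟨hu, h.le⟩
        nlinarith [hs]
    linarith
  calc Real.sqrt (1 + u^2) ≤ Real.sqrt ((u + (Real.sqrt u)⁻¹)^2) := Real.sqrt_le_sqrt key
    _ = u + (Real.sqrt u)⁻¹ := Real.sqrt_sq hb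

open Set Real in
lemma integral_exp_neg_mul_Ioi (r : ℝ) (hr : 0 < r) :
    ∫ u in Ioi (0:ℝ), Real.exp (-r * u) = 1/r := by
  have h := integral_comp_mul_left_Ioi (fun x => Real.exp (-x)) 0 hr
  simp only [mul_zero] at h
  have : (fun u => Real.exp (-r * u)) = (fun u => Real.exp (-(r * u))) := by
    funext u; ring_nf
  rw [this, h, integral_exp_neg_Ioi_zero, smul_eq_mul, mul_one, one_div]

open Set Real in
lemma integrableOn_bound (r : ℝ) (hr : 0 < r) :
    IntegrableOn (fun u => Real.exp (-r * u) * (r * (Real.sqrt u)⁻¹)) (Ioi (0:ℝ)) := by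
  have h := (integrableOn_rpow_mul_exp_neg_mul_rpow
    (by norm_num : (-1:ℝ) < -(1/2)) one_pos hr).const_mul r
  apply IntegrableOn.congr_fun h _ measurableSet_Ioi
  intro u hu
  rw [Set.mem_Ioi] at hu
  show r * (u ^ (-(1/2):ℝ) * Real.exp (-r * u ^ (1:ℝ)))
      = Real.exp (-r * u) * (r * (Real.sqrt u)⁻¹)
  rw [Real.rpow_one, Real.sqrt_eq_rpow, ← Real.rpow_neg hu.le]
  ring

open Set Real in
lemma integral_bound_val (r : ℝ) (hr : 0 < r) :
    ∫ u in Ioi (0:ℝ), Real.exp (-r * u) * (r * (Real.sqrt u)⁻¹)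
      = Real.sqrt π * Real.sqrt r := by
  have hc : ∀ u ∈ Ioi (0:ℝ), Real.exp (-r * u) * (r * (Real.sqrt u)⁻¹)
      = r * (u ^ (-(1/2) : ℝ) * Real.exp (-r * u ^ (1:ℝ))) := by
    intro u hu
    rw [mem_Ioi] at hu
    rw [Real.rpow_one, Real.sqrt_eq_rpow, ← Real.rpow_neg hu.le]
    ring
  rw [setIntegral_congr_fun measurableSet_Ioi hc, integral_const_mul,
    integral_rpow_mul_exp_neg_mul_rpow one_pos (by norm_num : (-1:ℝ) < -(1/2)) hr]
  rw [show (-(-(1/2:ℝ) + 1) / 1) = -(1/2 : ℝ) by norm_num,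
    show ((-(1/2:ℝ) + 1) / 1) = (1/2 : ℝ) by norm_num, Real.Gamma_one_half_eq]
  rw [show r * (r ^ (-(1/2):ℝ) * (1/1) * Real.sqrt π)
      = (r * r ^ (-(1/2):ℝ)) * Real.sqrt π by ring]
  rw [show r * r ^ (-(1/2):ℝ) = r ^ (1:ℝ) * r ^ (-(1/2):ℝ) by rw [Real.rpow_one],
    ← Real.rpow_add hr, show (1:ℝ) + -(1/2) = 1/2 by norm_num, ← Real.sqrt_eq_rpow]
  ring

open Set Real in
lemma besselK1_le_and_ge (r : ℝ) (hr : 0 < r) :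
    besselK1 r ≤ 1/r ∧ 1/r - besselK1 r ≤ Real.sqrt π * Real.sqrt r := by
  have h1 := integrableOn_exp_neg_mul r hr
  have h2 := integrableOn_exp_sqrt r hr
  have hsub : 1/r - besselK1 r
      = ∫ u in Ioi (0:ℝ), (Real.exp (-r * u) - Real.exp (-r * Real.sqrt (1 + u^2))) := by
    rw [besselK1_eq, ← integral_exp_neg_mul_Ioi r hr, ← integral_sub h1 h2]
  have hptnn : ∀ u ∈ Ioi (0:ℝ),
      0 ≤ Real.exp (-r * u) - Real.exp (-r * Real.sqrt (1 + u^2)) := by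
    intro u hu
    rw [mem_Ioi] at hu
    have : u ≤ Real.sqrt (1 + u^2) := by
      nlinarith [Real.sq_sqrt (by positivity : (0:ℝ) ≤ 1 + u^2), Real.sqrt_nonneg (1 + u^2)]
    have := Real.exp_le_exp.mpr (by nlinarith : -r * Real.sqrt (1 + u^2) ≤ -r * u)
    linarith
  constructor
  · have : 0 ≤ 1/r - besselK1 r := by
      rw [hsub]
      exact setIntegral_nonneg measurableSet_Ioi hptnn
    linarith
  · rw [hsub, ← integral_bound_val r hr]
    apply setIntegral_mono_on (h1.sub h2) (integrableOn_bound r hr) measurableSet_Ioi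
    intro u hu
    rw [mem_Ioi] at hu
    have hkey : Real.sqrt (1 + u^2) ≤ u + (Real.sqrt u)⁻¹ := sqrt_one_add_sq_le u hu
    have hsplit : Real.exp (-r * Real.sqrt (1 + u^2))
        = Real.exp (-r * u) * Real.exp (-r * (Real.sqrt (1 + u^2) - u)) := by
      rw [← Real.exp_add]; ring_nf
    have hx : 0 ≤ Real.sqrt (1 + u^2) - u := by
      nlinarith [Real.sq_sqrt (by positivity : (0:ℝ) ≤ 1 + u^2), Real.sqrt_nonneg (1 + u^2)]
    have hone : 1 - Real.exp (-(r * (Real.sqrt (1 + u^2) - u))) ≤ r * (Real.sqrt (1 + u^2) - u) := by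
      have := Real.add_one_le_exp (-(r * (Real.sqrt (1 + u^2) - u)))
      linarith
    have hexp : 0 < Real.exp (-r * u) := Real.exp_pos _
    calc Real.exp (-r * u) - Real.exp (-r * Real.sqrt (1 + u^2))
        = Real.exp (-r * u) * (1 - Real.exp (-(r * (Real.sqrt (1 + u^2) - u)))) := by
          rw [hsplit]; ring_nf
      _ ≤ Real.exp (-r * u) * (r * (Real.sqrt (1 + u^2) - u)) := by
          apply mul_le_mul_of_nonneg_left hone hexp.le
      _ ≤ Real.exp (-r * u) * (r * (Real.sqrt u)⁻¹) := by
          apply mul_le_mul_of_nonneg_left _ hexp.le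
          apply mul_le_mul_of_nonneg_left _ hr.le
          linarith
def hfun (r : ℝ) : ℝ := min (Real.pi^2 / r^2) (1 / r^8)

open Set Real in
lemma Wfun_nonneg {s : ℝ} (hs : 0 < s) : 0 ≤ Wfun s := by
  have h := (besselK1_le_and_ge s hs).1
  rw [Wfun]
  have : 1 / s^2 - besselK1 s / s = (1/s - besselK1 s) / s := by
    field_simp
  rw [this]
  apply div_nonneg _ hs.le
  linarith

open Set Real in
lemma Wfun_pow_le {s : ℝ} (hs : 0 < s) : Wfun s ^ 4 ≤ hfun s := by
  obtain ⟨h1, h2⟩ := besselK1_le_and_ge s hs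
  have hnn : 0 ≤ Wfun s := Wfun_nonneg hs
  have hss : Real.sqrt s > 0 := Real.sqrt_pos.mpr hs
  have hsq : Real.sqrt s ^ 2 = s := Real.sq_sqrt hs.le
  have hub1 : Wfun s ≤ Real.sqrt π / Real.sqrt s := by
    rw [Wfun, show 1 / s^2 - besselK1 s / s = (1/s - besselK1 s) / s by field_simp]
    rw [div_le_div_iff₀ hs (by positivity)]
    calc (1/s - besselK1 s) * Real.sqrt s ≤ (Real.sqrt π * Real.sqrt s) * Real.sqrt s := by
          apply mul_le_mul_of_nonneg_right h2 hss.le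
      _ = Real.sqrt π * s := by rw [mul_assoc, ← sq, hsq]
      _ = Real.sqrt π * s := rfl
  have hub2 : Wfun s ≤ 1 / s^2 := by
    rw [Wfun]
    have : 0 ≤ besselK1 s / s := div_nonneg (besselK1_nonneg s) hs.le
    linarith
  apply le_min
  · calc Wfun s ^ 4 ≤ (Real.sqrt π / Real.sqrt s) ^ 4 := by
          apply pow_le_pow_left₀ hnn hub1
      _ = π^2 / s^2 := by
          rw [div_pow]
          congr 1
          · rw [show (4:ℕ) = 2*2 by rfl, pow_mul, Real.sq_sqrt Real.pi_pos.le]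
          · rw [show (4:ℕ) = 2*2 by rfl, pow_mul, hsq]
  · calc Wfun s ^ 4 ≤ (1 / s^2) ^ 4 := by apply pow_le_pow_left₀ hnn hub2
      _ = 1 / s^8 := by rw [div_pow, one_pow, ← pow_mul]

lemma Wfun_zero : Wfun 0 = 0 := by
  simp [Wfun]

lemma hfun_zero : hfun 0 = 0 := by
  simp [hfun]

open Set Real in
lemma measurable_besselK1 : Measurable besselK1 := by
  have hc : Continuous (Function.uncurry
      (fun r t => Real.exp (-r * Real.cosh t) * Real.cosh t : ℝ → ℝ → ℝ)) := by
    apply Continuous.mul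
    · exact Real.continuous_exp.comp ((continuous_fst.neg).mul (Real.continuous_cosh.comp continuous_snd))
    · exact Real.continuous_cosh.comp continuous_snd
  exact (hc.stronglyMeasurable.integral_prod_right
    (ν := volume.restrict (Ioi (0:ℝ)))).measurable

lemma measurable_Wfun : Measurable Wfun := by
  apply Measurable.sub
  · exact (measurable_const.div ((measurable_id.pow_const 2)))
  · exact measurable_besselK1.div measurable_id
open Metric Set in
lemma ball_measure (ξ : E4) {s : ℝ} (hs : 0 ≤ s) :
    volume (Metric.ball ξ s) = ENNReal.ofReal (s ^ 4) * volume (Metric.ball (0:E4) 1) := by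
  rw [Measure.addHaar_ball volume ξ hs, finrank_euclideanSpace_fin]

lemma ofReal_half : ENNReal.ofReal ((1:ℝ)/2) = 2⁻¹ := by
  rw [one_div, ENNReal.ofReal_inv_of_pos two_pos]
  norm_num

lemma geom_sum_half : (∑' n : ℕ, (2⁻¹ : ENNReal)^n) = 2 := by
  rw [ENNReal.tsum_geometric, ENNReal.one_sub_inv_two, inv_inv]

open Metric Set in
lemma near_lintegral (ξ : E4) {ρ : ℝ} (hρ : 0 < ρ) :
    (∫⁻ x in Metric.ball ξ ρ, ENNReal.ofReal (1/‖x - ξ‖^2))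
      ≤ ENNReal.ofReal (8 * ρ^2) * volume (Metric.ball (0:E4) 1) := by
  set V := volume (Metric.ball (0:E4) 1) with hV
  set A : ℕ → Set E4 := fun n => Metric.ball ξ (ρ/2^n) \ Metric.ball ξ (ρ/2^(n+1)) with hA
  have hcover : Metric.ball ξ ρ ⊆ {ξ} ∪ ⋃ n, A n := by
    intro x hx
    rcases eq_or_ne x ξ with h | h
    · exact Or.inl (by simp [h])
    right
    have hr0 : 0 < ‖x - ξ‖ := by rw [norm_pos_iff]; exact sub_ne_zero.mpr h
    have hrρ : ‖x - ξ‖ < ρ := by rw [mem_ball, dist_eq_norm] at hx; exact hx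
    have hex : ∃ n : ℕ, ρ / 2^(n+1) ≤ ‖x - ξ‖ := by
      obtain ⟨n, hn⟩ := pow_unbounded_of_one_lt (ρ / ‖x - ξ‖) (one_lt_two (α := ℝ))
      refine ⟨n, ?_⟩
      rw [div_le_iff₀ (by positivity)]
      rw [div_lt_iff₀ hr0] at hn
      calc ρ ≤ 2^n * ‖x-ξ‖ := hn.le
        _ ≤ ‖x-ξ‖ * 2^(n+1) := by
            rw [mul_comm]
            apply mul_le_mul_of_nonneg_left _ hr0.le
            apply pow_le_pow_right₀ one_le_two (Nat.le_succ n)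
    have h1 : ρ / 2^(Nat.find hex +1) ≤ ‖x - ξ‖ := Nat.find_spec hex
    have h2 : ‖x - ξ‖ < ρ / 2^(Nat.find hex) := by
      rcases Nat.eq_zero_or_pos (Nat.find hex) with h0 | h0
      · rw [h0]; simpa using hrρ
      · obtain ⟨m, hm⟩ := Nat.exists_eq_succ_of_ne_zero h0.ne'
        have hmin := Nat.find_min hex (m := m) (by omega)
        push_neg at hmin
        rw [hm]
        exact hmin
    refine mem_iUnion.mpr ⟨Nat.find hex, ?_, ?_⟩
    · rw [mem_ball, dist_eq_norm]; exact h2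
    · simp only [mem_ball, dist_eq_norm, not_lt]; exact h1
  have hshell : ∀ n : ℕ, (∫⁻ x in A n, ENNReal.ofReal (1/‖x - ξ‖^2))
      ≤ (ENNReal.ofReal (4 * ρ^2) * V) * 2⁻¹^n := by
    intro n
    have hmeasA : MeasurableSet (A n) :=
      measurableSet_ball.diff measurableSet_ball
    have hbound : ∀ x ∈ A n, ENNReal.ofReal (1/‖x - ξ‖^2)
        ≤ ENNReal.ofReal ((2^(n+1))^2/ρ^2) := by
      intro x hx
      apply ENNReal.ofReal_le_ofReal
      have hge : ρ/2^(n+1) ≤ ‖x - ξ‖ := by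
        have := hx.2
        simpa only [mem_ball, dist_eq_norm, not_lt] using this
      have hpos : (0:ℝ) < ρ/2^(n+1) := by positivity
      have hxpos : (0:ℝ) < ‖x - ξ‖ := lt_of_lt_of_le hpos hge
      rw [div_le_div_iff₀ (by positivity) (by positivity)]
      have hps : (ρ/2^(n+1))^2 ≤ ‖x - ξ‖^2 := pow_le_pow_left₀ hpos.le hge 2
      have hid : (ρ/2^(n+1))^2 * (2^(n+1))^2 = ρ^2 := by field_simp
      nlinarith [sq_nonneg ((2:ℝ)^(n+1))]
    calc (∫⁻ x in A n, ENNReal.ofReal (1/‖x - ξ‖^2))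
        ≤ ∫⁻ _x in A n, ENNReal.ofReal ((2^(n+1))^2/ρ^2) :=
          setLIntegral_mono' hmeasA hbound
      _ = ENNReal.ofReal ((2^(n+1))^2/ρ^2) * volume (A n) := setLIntegral_const _ _
      _ ≤ ENNReal.ofReal ((2^(n+1))^2/ρ^2) * volume (Metric.ball ξ (ρ/2^n)) := by
          have : volume (A n) ≤ volume (Metric.ball ξ (ρ/2^n)) :=
            measure_mono (diff_subset)
          gcongr
      _ = ENNReal.ofReal ((2^(n+1))^2/ρ^2) * (ENNReal.ofReal ((ρ/2^n) ^ 4) * V) := by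
          rw [ball_measure ξ (by positivity)]
      _ = ENNReal.ofReal ((2^(n+1))^2/ρ^2 * (ρ/2^n)^4) * V := by
          rw [← mul_assoc, ← ENNReal.ofReal_mul (by positivity)]
      _ ≤ (ENNReal.ofReal (4 * ρ^2) * V) * 2⁻¹^n := by
          have heq : (2^(n+1):ℝ)^2/ρ^2 * (ρ/2^n)^4 = 4 * ρ^2 * (((1:ℝ)/2)^n)^2 := by
            rw [show ((1:ℝ)/2)^n = 1/2^n by rw [div_pow, one_pow]]
            field_simp
            ring
          have hle : (2^(n+1):ℝ)^2/ρ^2 * (ρ/2^n)^4 ≤ 4 * ρ^2 * ((1:ℝ)/2)^n := by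
            rw [heq]
            have h1 : (((1:ℝ)/2)^n)^2 ≤ ((1:ℝ)/2)^n := by
              rw [sq]
              nlinarith [pow_nonneg (by norm_num : (0:ℝ) ≤ 1/2) n,
                pow_le_one₀ (by norm_num : (0:ℝ) ≤ 1/2) (by norm_num : (1:ℝ)/2 ≤ 1) (n := n)]
            nlinarith [sq_nonneg ρ]
          calc ENNReal.ofReal ((2^(n+1):ℝ)^2/ρ^2 * (ρ/2^n)^4) * V
              ≤ ENNReal.ofReal (4 * ρ^2 * ((1:ℝ)/2)^n) * V := by
                gcongr
                all_goals first | exact ENNReal.ofReal_le_ofReal hle | exact hle | rfl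
            _ = (ENNReal.ofReal (4 * ρ^2) * V) * 2⁻¹^n := by
                rw [ENNReal.ofReal_mul (by positivity), ENNReal.ofReal_pow (by norm_num),
                  ofReal_half]; ring
  calc (∫⁻ x in Metric.ball ξ ρ, ENNReal.ofReal (1/‖x - ξ‖^2))
      ≤ ∫⁻ x in ({ξ} ∪ ⋃ n, A n), ENNReal.ofReal (1/‖x - ξ‖^2) := lintegral_mono_set hcover
    _ ≤ (∫⁻ x in ({ξ}:Set E4), ENNReal.ofReal (1/‖x - ξ‖^2))
          + ∫⁻ x in ⋃ n, A n, ENNReal.ofReal (1/‖x - ξ‖^2) := lintegral_union_le _ _ _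
    _ ≤ 0 + ∑' n, ∫⁻ x in A n, ENNReal.ofReal (1/‖x - ξ‖^2) := by
        gcongr
        · rw [setLIntegral_measure_zero _ _ (measure_singleton ξ)]
        · exact lintegral_iUnion_le _ _
    _ ≤ ∑' n, (ENNReal.ofReal (4 * ρ^2) * V) * 2⁻¹^n := by
        rw [zero_add]
        exact ENNReal.tsum_le_tsum hshell
    _ = (ENNReal.ofReal (4 * ρ^2) * V) * 2 := by
        rw [ENNReal.tsum_mul_left, geom_sum_half]
    _ = ENNReal.ofReal (8 * ρ^2) * V := by
        rw [mul_right_comm, mul_comm (ENNReal.ofReal (4 * ρ^2)) 2,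
          ← ENNReal.ofReal_ofNat 2, ← ENNReal.ofReal_mul (by norm_num)]
        norm_num
        congr 1
        ring
open Metric Set in
lemma far_lintegral (ξ : E4) {ρ : ℝ} (hρ : 0 < ρ) :
    (∫⁻ x in (Metric.ball ξ ρ)ᶜ, ENNReal.ofReal (1/‖x - ξ‖^8))
      ≤ ENNReal.ofReal (32 / ρ^4) * volume (Metric.ball (0:E4) 1) := by
  set V := volume (Metric.ball (0:E4) 1) with hV
  set S : ℕ → Set E4 := fun n => Metric.ball ξ (2^(n+1) * ρ) \ Metric.ball ξ (2^n * ρ) with hS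
  have hcover : (Metric.ball ξ ρ)ᶜ ⊆ ⋃ n, S n := by
    intro x hx
    have hge : ρ ≤ ‖x - ξ‖ := by
      simpa only [mem_compl_iff, mem_ball, dist_eq_norm, not_lt] using hx
    have hr0 : 0 < ‖x - ξ‖ := lt_of_lt_of_le hρ hge
    have hex : ∃ n : ℕ, ‖x - ξ‖ < 2^(n+1) * ρ := by
      obtain ⟨n, hn⟩ := pow_unbounded_of_one_lt (‖x - ξ‖ / ρ) (one_lt_two (α := ℝ))
      refine ⟨n, ?_⟩
      rw [div_lt_iff₀ hρ] at hn
      calc ‖x - ξ‖ < 2^n * ρ := hn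
        _ ≤ 2^(n+1) * ρ := by
            apply mul_le_mul_of_nonneg_right _ hρ.le
            apply pow_le_pow_right₀ one_le_two (Nat.le_succ n)
    have h1 : ‖x - ξ‖ < 2^(Nat.find hex + 1) * ρ := Nat.find_spec hex
    have h2 : 2^(Nat.find hex) * ρ ≤ ‖x - ξ‖ := by
      rcases Nat.eq_zero_or_pos (Nat.find hex) with h0 | h0
      · rw [h0]; simpa using hge
      · obtain ⟨m, hm⟩ := Nat.exists_eq_succ_of_ne_zero h0.ne'
        have hmin := Nat.find_min hex (m := m) (by omega)
        push_neg at hmin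
        rw [hm]
        exact hmin
    refine mem_iUnion.mpr ⟨Nat.find hex, ?_, ?_⟩
    · rw [mem_ball, dist_eq_norm]; exact h1
    · simp only [mem_ball, dist_eq_norm, not_lt]; exact h2
  have hshell : ∀ n : ℕ, (∫⁻ x in S n, ENNReal.ofReal (1/‖x - ξ‖^8))
      ≤ (ENNReal.ofReal (16 / ρ^4) * V) * 2⁻¹^n := by
    intro n
    have hmeasS : MeasurableSet (S n) := measurableSet_ball.diff measurableSet_ball
    have hbound : ∀ x ∈ S n, ENNReal.ofReal (1/‖x - ξ‖^8)
        ≤ ENNReal.ofReal (1/(2^n * ρ)^8) := by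
      intro x hx
      apply ENNReal.ofReal_le_ofReal
      have hge : 2^n * ρ ≤ ‖x - ξ‖ := by
        simpa only [mem_ball, dist_eq_norm, not_lt] using hx.2
      have hpos : (0:ℝ) < 2^n * ρ := by positivity
      apply one_div_le_one_div_of_le (by positivity)
      exact pow_le_pow_left₀ hpos.le hge 8
    calc (∫⁻ x in S n, ENNReal.ofReal (1/‖x - ξ‖^8))
        ≤ ∫⁻ _x in S n, ENNReal.ofReal (1/(2^n * ρ)^8) := setLIntegral_mono' hmeasS hbound
      _ = ENNReal.ofReal (1/(2^n * ρ)^8) * volume (S n) := setLIntegral_const _ _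
      _ ≤ ENNReal.ofReal (1/(2^n * ρ)^8) * volume (Metric.ball ξ (2^(n+1) * ρ)) := by
          have : volume (S n) ≤ volume (Metric.ball ξ (2^(n+1) * ρ)) :=
            measure_mono diff_subset
          gcongr
      _ = ENNReal.ofReal (1/(2^n * ρ)^8) * (ENNReal.ofReal ((2^(n+1) * ρ) ^ 4) * V) := by
          rw [ball_measure ξ (by positivity)]
      _ = ENNReal.ofReal (1/(2^n * ρ)^8 * (2^(n+1) * ρ)^4) * V := by
          rw [← mul_assoc, ← ENNReal.ofReal_mul (by positivity)]
      _ ≤ (ENNReal.ofReal (16 / ρ^4) * V) * 2⁻¹^n := by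
          have heq : (1:ℝ)/(2^n * ρ)^8 * (2^(n+1) * ρ)^4
              = 16 / ρ^4 * (((1:ℝ)/2)^n)^4 := by
            rw [show ((1:ℝ)/2)^n = 1/2^n by rw [div_pow, one_pow]]
            field_simp
            ring
          have hle : (1:ℝ)/(2^n * ρ)^8 * (2^(n+1) * ρ)^4 ≤ 16 / ρ^4 * ((1:ℝ)/2)^n := by
            rw [heq]
            have hp : (0:ℝ) ≤ ((1:ℝ)/2)^n := by positivity
            have hple : ((1:ℝ)/2)^n ≤ 1 :=
              pow_le_one₀ (by norm_num) (by norm_num)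
            have h1 : (((1:ℝ)/2)^n)^4 ≤ ((1:ℝ)/2)^n := by
              calc (((1:ℝ)/2)^n)^4 ≤ ((1:ℝ)/2)^n * 1^3 := by
                    rw [show (4:ℕ) = 1+3 by rfl, pow_add, pow_one]
                    apply mul_le_mul_of_nonneg_left _ hp
                    exact pow_le_pow_left₀ hp hple 3
                _ = ((1:ℝ)/2)^n := by ring
            have h2 : (0:ℝ) ≤ 16 / ρ^4 := by positivity
            nlinarith
          calc ENNReal.ofReal ((1:ℝ)/(2^n * ρ)^8 * (2^(n+1) * ρ)^4) * V
              ≤ ENNReal.ofReal (16 / ρ^4 * ((1:ℝ)/2)^n) * V := by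
                gcongr
                all_goals first | exact ENNReal.ofReal_le_ofReal hle | exact hle | rfl
            _ = (ENNReal.ofReal (16 / ρ^4) * V) * 2⁻¹^n := by
                rw [ENNReal.ofReal_mul (by positivity), ENNReal.ofReal_pow (by norm_num),
                  ofReal_half]; ring
  calc (∫⁻ x in (Metric.ball ξ ρ)ᶜ, ENNReal.ofReal (1/‖x - ξ‖^8))
      ≤ ∫⁻ x in ⋃ n, S n, ENNReal.ofReal (1/‖x - ξ‖^8) := lintegral_mono_set hcover
    _ ≤ ∑' n, ∫⁻ x in S n, ENNReal.ofReal (1/‖x - ξ‖^8) := lintegral_iUnion_le _ _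
    _ ≤ ∑' n, (ENNReal.ofReal (16 / ρ^4) * V) * 2⁻¹^n := ENNReal.tsum_le_tsum hshell
    _ = (ENNReal.ofReal (16 / ρ^4) * V) * 2 := by
        rw [ENNReal.tsum_mul_left, geom_sum_half]
    _ = ENNReal.ofReal (32 / ρ^4) * V := by
        rw [mul_right_comm, mul_comm (ENNReal.ofReal (16 / ρ^4)) 2,
          ← ENNReal.ofReal_ofNat 2, ← ENNReal.ofReal_mul (by norm_num)]
        norm_num
        rw [← ENNReal.ofReal_ofNat 2, ← ENNReal.ofReal_mul (by positivity)]
        ring_nf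
open Real in
lemma Wcorr_pow_le (lam δ : ℝ) (ξ x : E4) :
    (Wcorr lam δ ξ x)^4 ≤ 64 * lam^4 * δ^4 * hfun (Real.sqrt lam * ‖x - ξ‖) := by
  have h2 : (Real.sqrt 2)^2 = 2 := Real.sq_sqrt (by norm_num)
  have h64 : ((2 * Real.sqrt 2) * lam * δ)^4 = 64 * lam^4 * δ^4 := by
    have : ((2 * Real.sqrt 2) * lam * δ)^4 = (2 * Real.sqrt 2)^4 * (lam^4 * δ^4) := by ring
    rw [this, show (2 * Real.sqrt 2)^4 = 2^4 * ((Real.sqrt 2)^2)^2 by ring, h2]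
    ring
  have hWc : (Wcorr lam δ ξ x)^4
      = ((2 * Real.sqrt 2) * lam * δ)^4 * (Wfun (Real.sqrt lam * ‖x - ξ‖))^4 := by
    rw [Wcorr]; ring
  rw [hWc, h64]
  have hs : 0 ≤ Real.sqrt lam * ‖x - ξ‖ := by positivity
  rcases hs.eq_or_lt with h0 | hpos
  · rw [← h0]
    simp [Wfun_zero, hfun_zero]
  · exact mul_le_mul_of_nonneg_left (Wfun_pow_le hpos) (by positivity)

open Real in
lemma hfun_near {lam r : ℝ} (hlam : 0 < lam) (hr : 0 ≤ r) :
    hfun (Real.sqrt lam * r) ≤ (π^2/lam) * (1/r^2) := by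
  rcases hr.eq_or_lt with h0 | hr0
  · rw [← h0]
    simp [hfun_zero, Real.mul_self_sqrt]
  · calc hfun (Real.sqrt lam * r) ≤ π^2/(Real.sqrt lam * r)^2 := by
          unfold hfun; exact min_le_left _ _
      _ = (π^2/lam) * (1/r^2) := by
          rw [mul_pow, Real.sq_sqrt hlam.le]
          field_simp

open Real in
lemma hfun_far {lam r : ℝ} (hlam : 0 < lam) (hr : 0 ≤ r) :
    hfun (Real.sqrt lam * r) ≤ (1/lam^4) * (1/r^8) := by
  rcases hr.eq_or_lt with h0 | hr0
  · rw [← h0]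
    simp [hfun_zero]
  · calc hfun (Real.sqrt lam * r) ≤ 1/(Real.sqrt lam * r)^8 := by
          unfold hfun; exact min_le_right _ _
      _ = (1/lam^4) * (1/r^8) := by
          rw [mul_pow, show ((Real.sqrt lam)^8 : ℝ) = ((Real.sqrt lam)^2)^4 by ring,
            Real.sq_sqrt hlam.le]
          field_simp

theorem Wcorr_L4_small (d : ℝ) (hd : 0 < d) (Ω : Set E4)
    (hΩb : Bornology.IsBounded Ω) (ξ : E4) (hξ : ξ ∈ Ω) :
    ∃ C > 0, ∃ lam0 : ℝ,
      (∀ lam : ℝ, lam0 ≤ lam →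
        (∫ x in Ω, (Wcorr lam (d / (lam * Real.log lam)) ξ x)^4)
          ≤ C * lam^2 * (d / (lam * Real.log lam))^4 * (Real.log lam)^4) ∧
      Tendsto (fun lam : ℝ =>
          C * lam^2 * (d / (lam * Real.log lam))^4 * (Real.log lam)^4)
        atTop (nhds 0) := by
  classical
  set V : ENNReal := volume (Metric.ball (0:E4) 1) with hV
  have hVfin : V ≠ ⊤ := measure_ball_lt_top.ne
  have hVt : 0 ≤ V.toReal := ENNReal.toReal_nonneg
  set C : ℝ := 10240 * V.toReal + 1 with hC
  have hC0 : 0 < C := by positivity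
  refine ⟨C, hC0, 3, ?_, ?_⟩
  · intro lam hlam
    set δ : ℝ := d / (lam * Real.log lam) with hδdef
    have hlam0 : (0:ℝ) < lam := by linarith
    have hlog : 1 ≤ Real.log lam := by
      rw [Real.le_log_iff_exp_le hlam0]
      calc Real.exp 1 ≤ 2.7182818286 := Real.exp_one_lt_d9.le
        _ ≤ 3 := by norm_num
        _ ≤ lam := hlam
    have hsq : (0:ℝ) < Real.sqrt lam := Real.sqrt_pos.mpr hlam0
    set ρ : ℝ := (Real.sqrt lam)⁻¹ with hρdef
    have hρ : 0 < ρ := by positivity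
    -- measurability
    have hmeasW : Measurable fun x : E4 => (Wcorr lam δ ξ x)^4 := by
      have h1 : Measurable fun x : E4 => Real.sqrt lam * ‖x - ξ‖ :=
        ((measurable_id.sub_const ξ).norm.const_mul _)
      have h2 : Measurable fun x : E4 => Wcorr lam δ ξ x := by
        have := (measurable_Wfun.comp h1).const_mul ((2 * Real.sqrt 2) * lam * δ)
        simpa [Wcorr, mul_assoc] using this
      exact h2.pow_const 4
    have hnn : 0 ≤ᵐ[volume.restrict Ω] fun x : E4 => (Wcorr lam δ ξ x)^4 :=
      Filter.Eventually.of_forall fun x => Even.pow_nonneg (by decide) _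
    rw [MeasureTheory.integral_eq_lintegral_of_nonneg_ae hnn hmeasW.aestronglyMeasurable]
    have hRHSnn : 0 ≤ C * lam^2 * δ^4 * (Real.log lam)^4 := by positivity
    apply ENNReal.toReal_le_of_le_ofReal hRHSnn
    -- lintegral estimates
    have hball : (∫⁻ x in Metric.ball ξ ρ, ENNReal.ofReal (hfun (Real.sqrt lam * ‖x - ξ‖)))
        ≤ ENNReal.ofReal (8 * Real.pi^2 / lam^2) * V := by
      calc (∫⁻ x in Metric.ball ξ ρ, ENNReal.ofReal (hfun (Real.sqrt lam * ‖x - ξ‖)))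
          ≤ ∫⁻ x in Metric.ball ξ ρ,
              ENNReal.ofReal (Real.pi^2/lam) * ENNReal.ofReal (1/‖x - ξ‖^2) := by
            apply lintegral_mono
            intro x
            dsimp only
            rw [← ENNReal.ofReal_mul (by positivity)]
            exact ENNReal.ofReal_le_ofReal (hfun_near hlam0 (norm_nonneg _))
        _ = ENNReal.ofReal (Real.pi^2/lam)
              * ∫⁻ x in Metric.ball ξ ρ, ENNReal.ofReal (1/‖x - ξ‖^2) :=
            lintegral_const_mul' _ _ ENNReal.ofReal_ne_top
        _ ≤ ENNReal.ofReal (Real.pi^2/lam) * (ENNReal.ofReal (8 * ρ^2) * V) := by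
            gcongr
            exact near_lintegral ξ hρ
        _ = ENNReal.ofReal (8 * Real.pi^2 / lam^2) * V := by
            rw [← mul_assoc, ← ENNReal.ofReal_mul (by positivity)]
            congr 2
            rw [hρdef]
            rw [show ((Real.sqrt lam)⁻¹)^2 = ((Real.sqrt lam)^2)⁻¹ by ring,
              Real.sq_sqrt hlam0.le]
            field_simp
    have hfar : (∫⁻ x in (Metric.ball ξ ρ)ᶜ, ENNReal.ofReal (hfun (Real.sqrt lam * ‖x - ξ‖)))
        ≤ ENNReal.ofReal (32 / lam^2) * V := by
      calc (∫⁻ x in (Metric.ball ξ ρ)ᶜ, ENNReal.ofReal (hfun (Real.sqrt lam * ‖x - ξ‖)))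
          ≤ ∫⁻ x in (Metric.ball ξ ρ)ᶜ,
              ENNReal.ofReal (1/lam^4) * ENNReal.ofReal (1/‖x - ξ‖^8) := by
            apply lintegral_mono
            intro x
            dsimp only
            rw [← ENNReal.ofReal_mul (by positivity)]
            exact ENNReal.ofReal_le_ofReal (hfun_far hlam0 (norm_nonneg _))
        _ = ENNReal.ofReal (1/lam^4)
              * ∫⁻ x in (Metric.ball ξ ρ)ᶜ, ENNReal.ofReal (1/‖x - ξ‖^8) :=
            lintegral_const_mul' _ _ ENNReal.ofReal_ne_top
        _ ≤ ENNReal.ofReal (1/lam^4) * (ENNReal.ofReal (32 / ρ^4) * V) := by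
            gcongr
            exact far_lintegral ξ hρ
        _ = ENNReal.ofReal (32 / lam^2) * V := by
            rw [← mul_assoc, ← ENNReal.ofReal_mul (by positivity)]
            congr 2
            rw [hρdef]
            rw [show ((Real.sqrt lam)⁻¹)^4 = (((Real.sqrt lam)^2)^2)⁻¹ by ring,
              Real.sq_sqrt hlam0.le]
            field_simp
    have hsplit : (∫⁻ x in Ω, ENNReal.ofReal (hfun (Real.sqrt lam * ‖x - ξ‖)))
        ≤ ENNReal.ofReal (8 * Real.pi^2 / lam^2) * V + ENNReal.ofReal (32 / lam^2) * V := by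
      calc (∫⁻ x in Ω, ENNReal.ofReal (hfun (Real.sqrt lam * ‖x - ξ‖)))
          ≤ ∫⁻ x in (Metric.ball ξ ρ ∪ (Metric.ball ξ ρ)ᶜ),
              ENNReal.ofReal (hfun (Real.sqrt lam * ‖x - ξ‖)) := by
            apply lintegral_mono_set
            rw [Set.union_compl_self]
            exact Set.subset_univ Ω
        _ ≤ (∫⁻ x in Metric.ball ξ ρ, ENNReal.ofReal (hfun (Real.sqrt lam * ‖x - ξ‖)))
              + ∫⁻ x in (Metric.ball ξ ρ)ᶜ, ENNReal.ofReal (hfun (Real.sqrt lam * ‖x - ξ‖)) :=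
            lintegral_union_le _ _ _
        _ ≤ _ := add_le_add hball hfar
    have hsum : ENNReal.ofReal (8 * Real.pi^2 / lam^2) * V + ENNReal.ofReal (32 / lam^2) * V
        ≤ ENNReal.ofReal (160 / lam^2) * V := by
      rw [← add_mul, ← ENNReal.ofReal_add (by positivity) (by positivity)]
      refine mul_le_mul_left (ENNReal.ofReal_le_ofReal ?_) V
      have hπ2 : Real.pi^2 ≤ 16 := by nlinarith [Real.pi_le_four, Real.pi_pos]
      rw [← add_div]
      gcongr
      linarith
    calc (∫⁻ x in Ω, ENNReal.ofReal ((Wcorr lam δ ξ x)^4))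
        ≤ ∫⁻ x in Ω, ENNReal.ofReal (64 * lam^4 * δ^4)
            * ENNReal.ofReal (hfun (Real.sqrt lam * ‖x - ξ‖)) := by
          apply lintegral_mono
          intro x
          dsimp only
          rw [← ENNReal.ofReal_mul (by positivity)]
          exact ENNReal.ofReal_le_ofReal (Wcorr_pow_le lam δ ξ x)
      _ = ENNReal.ofReal (64 * lam^4 * δ^4)
            * ∫⁻ x in Ω, ENNReal.ofReal (hfun (Real.sqrt lam * ‖x - ξ‖)) :=
          lintegral_const_mul' _ _ ENNReal.ofReal_ne_top
      _ ≤ ENNReal.ofReal (64 * lam^4 * δ^4) * (ENNReal.ofReal (160 / lam^2) * V) := by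
          gcongr
          exact hsplit.trans hsum
      _ = ENNReal.ofReal (64 * lam^4 * δ^4 * (160 / lam^2)) * V := by
          rw [← mul_assoc, ← ENNReal.ofReal_mul (by positivity)]
      _ ≤ ENNReal.ofReal (C * lam^2 * δ^4 * (Real.log lam)^4) := by
          rw [← ENNReal.ofReal_toReal hVfin, ← ENNReal.ofReal_mul (by positivity)]
          apply ENNReal.ofReal_le_ofReal
          have h1 : 64 * lam^4 * δ^4 * (160 / lam^2) = 10240 * lam^2 * δ^4 := by
            field_simp
            ring
          rw [h1]
          have h2 : (0:ℝ) ≤ lam^2 * δ^4 := by positivity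
          have h3 : 1 ≤ (Real.log lam)^4 := one_le_pow₀ hlog
          nlinarith [mul_nonneg h2 (by linarith : (0:ℝ) ≤ (Real.log lam)^4 - 1),
            mul_nonneg hVt (mul_nonneg h2 (by linarith : (0:ℝ) ≤ (Real.log lam)^4 - 1))]
  · -- Tendsto
    have hev : (fun lam : ℝ => C * lam^2 * (d / (lam * Real.log lam))^4 * (Real.log lam)^4)
        =ᶠ[atTop] fun lam : ℝ => (C * d^4) / lam^2 := by
      filter_upwards [eventually_ge_atTop (3:ℝ)] with lam hlam
      have hlam0 : (0:ℝ) < lam := by linarith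
      have hlog : 1 ≤ Real.log lam := by
        rw [Real.le_log_iff_exp_le hlam0]
        calc Real.exp 1 ≤ 2.7182818286 := Real.exp_one_lt_d9.le
          _ ≤ 3 := by norm_num
          _ ≤ lam := hlam
      have hlogne : Real.log lam ≠ 0 := by linarith
      field_simp
    apply Tendsto.congr' hev.symm
    exact Tendsto.div_atTop tendsto_const_nhds (tendsto_pow_atTop (by norm_num))
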